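/- Let G = (V,E) be a graph on n vertices such that for a distinguished vertex b and vertices a_1,…,a_k with k ≥ (1−α)n (α ≥ 1/2), for each i the set S_i = L(a_i) ∩ L(b) separates a_i from b with the component C_i containing a_i having |C_i| ≤ n/2 (or a_i ∈ S_i with C_i = ∅). If |C_i| < (1−α)n for all i, then S = S_1 ∪ … ∪ S_k is an α-balanced separator of G, and hence |L(b)| ≥ b_α. -/

import Mathlib

/-- `S` is an `α`-balanced separator of `G`. -/
def IsBalancedSeparator {V : Type*} [Fintype V] (G : SimpleGraph V) (α : ℝ)
    (S : Finset V) : Prop :=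
  ∀ C : (G.induce ((↑S : Set V)ᶜ)).ConnectedComponent,
    (C.supp.ncard : ℝ) ≤ α * Fintype.card V

/-- `b_α`: the minimum size of an `α`-balanced separator of `G`. -/
noncomputable def minBalSepSize {V : Type*} [Fintype V] (G : SimpleGraph V)
    (α : ℝ) : ℕ :=
  sInf {m : ℕ | ∃ S : Finset V, IsBalancedSeparator G α S ∧ S.card = m}

/-- The connected component of `x` in `G` after removing `S`: all vertices
reachable from `x` by a walk avoiding `S` (empty if `x ∈ S`). -/
def compAvoiding {V : Type*} (G : SimpleGraph V) (S : Finset V) (x : V) :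
    Set V :=
  {y : V | ∃ p : G.Walk x y, ∀ z ∈ p.support, z ∉ S}

/-- Suppose `α ∈ [1/2, 1)`, `b` is a vertex, `a_1, …, a_k` are
distinct vertices with `k ≥ (1-α)n`, each `S_i ⊆ L(b)` separates `a_i` from `b`
with the component `C_i` of `a_i` satisfying `|C_i| ≤ n/2` and `|C_i| < (1-α)n`.
Then `S = S_1 ∪ … ∪ S_k` is an `α`-balanced separator, and hence
`|L(b)| ≥ b_α`. -/
theorem union_of_label_separators_balanced {V : Type*} [Fintype V] [DecidableEq V]
    (G : SimpleGraph V) (α : ℝ) (hα : 1 / 2 ≤ α) (hα1 : α < 1)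
    (b : V) (k : ℕ) (a : Fin k → V) (ha : Function.Injective a)
    (hk : (1 - α) * Fintype.card V ≤ (k : ℝ))
    (Lb : Finset V) (S : Fin k → Finset V)
    (hSL : ∀ i, S i ⊆ Lb)
    (hsep : ∀ i, b ∉ compAvoiding G (S i) (a i))
    (hhalf : ∀ i, ((compAvoiding G (S i) (a i)).ncard : ℝ) ≤ Fintype.card V / 2)
    (hsmall : ∀ i, ((compAvoiding G (S i) (a i)).ncard : ℝ) <
      (1 - α) * Fintype.card V) :
    IsBalancedSeparator G α (Finset.univ.biUnion S) ∧
      minBalSepSize G α ≤ Lb.card := by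
  classical
  set T : Finset V := Finset.univ.biUnion S with hT
  set s : Set V := (↑T : Set V)ᶜ with hs
  have hn0 : (0:ℝ) ≤ (Fintype.card V : ℝ) := by positivity
  -- key: any pair in the same component gives a walk in G avoiding T
  have key : ∀ u v : ↥s, (G.induce s).Reachable u v →
      ∃ p : G.Walk (u:V) (v:V), ∀ z ∈ p.support, z ∈ s := by
    intro u v h
    obtain ⟨p⟩ := h
    refine ⟨p.map (SimpleGraph.Embedding.induce s).toHom, ?_⟩
    intro z hz
    erw [SimpleGraph.Walk.support_map, List.mem_map] at hz
    obtain ⟨w, _, rfl⟩ := hz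
    exact w.2
  have hbal : IsBalancedSeparator G α T := by
    intro C
    by_cases hcase : ∃ i, ∃ hmem : a i ∈ s,
        (G.induce s).connectedComponentMk ⟨a i, hmem⟩ = C
    · obtain ⟨i, hmem, hC⟩ := hcase
      have hsub : (Subtype.val '' C.supp : Set V) ⊆ compAvoiding G (S i) (a i) := by
        rintro y ⟨⟨y, hy⟩, hysupp, rfl⟩
        have hreach : (G.induce s).Reachable ⟨a i, hmem⟩ ⟨y, hy⟩ :=
          SimpleGraph.ConnectedComponent.exact (hC.trans
            ((SimpleGraph.ConnectedComponent.mem_supp_iff _ _).mp hysupp).symm)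
        obtain ⟨p, hp⟩ := key _ _ hreach
        exact ⟨p, fun z hz hzS => (hp z hz) (Finset.mem_biUnion.mpr ⟨i, Finset.mem_univ i, hzS⟩)⟩
      have h1 : C.supp.ncard = (Subtype.val '' C.supp).ncard :=
        (Set.ncard_image_of_injective _ Subtype.val_injective).symm
      have h2 : (Subtype.val '' C.supp).ncard ≤ (compAvoiding G (S i) (a i)).ncard :=
        Set.ncard_le_ncard hsub (Set.toFinite _)
      calc (C.supp.ncard : ℝ) ≤ ((compAvoiding G (S i) (a i)).ncard : ℝ) := by
            rw [h1]; exact_mod_cast h2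
        _ ≤ Fintype.card V / 2 := hhalf i
        _ ≤ α * Fintype.card V := by nlinarith
    · -- no a i in C
      push_neg at hcase
      have hdisj : Disjoint (Subtype.val '' C.supp : Set V) (Set.range a) := by
        rw [Set.disjoint_right]
        rintro y ⟨i, rfl⟩ ⟨⟨y', hy'⟩, hysupp, hval⟩
        subst hval
        exact hcase i hy' hysupp
      have hcard : (Subtype.val '' C.supp).ncard + k ≤ Fintype.card V := by
        have hrange : (Set.range a).ncard = k := by
          rw [← Set.image_univ, Set.ncard_image_of_injective _ ha, Set.ncard_univ,
            Nat.card_eq_fintype_card, Fintype.card_fin]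
        have := Set.ncard_union_eq hdisj (Set.toFinite _) (Set.toFinite _)
        have hle : ((Subtype.val '' C.supp) ∪ Set.range a).ncard ≤ Fintype.card V := by
          rw [← Nat.card_eq_fintype_card, ← Set.ncard_univ]
          exact Set.ncard_le_ncard (Set.subset_univ _) (Set.toFinite _)
        omega
      have h1 : C.supp.ncard = (Subtype.val '' C.supp).ncard :=
        (Set.ncard_image_of_injective _ Subtype.val_injective).symm
      have hcardR : (C.supp.ncard : ℝ) + k ≤ Fintype.card V := by
        rw [h1]; exact_mod_cast hcard
      nlinarith
  refine ⟨hbal, ?_⟩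
  calc minBalSepSize G α ≤ T.card := Nat.sInf_le ⟨T, hbal, rfl⟩
    _ ≤ Lb.card := Finset.card_le_card (by
        intro x hx
        obtain ⟨i, _, hxi⟩ := Finset.mem_biUnion.mp hx
        exact hSL i hxi)
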